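/- On ℤ⁶ = ℤ³ ⊕ ℤ³ define the symmetric bilinear form Q((x,y),(x′,y′)) = B(x,x′) − B(y,y′) and the endomorphism T(x,y) = (Mx, y). Then the vectors v₁ = (1,0,1,0,0,0), v₂ = (0,1,0,0,1,0), v₃ = (1,0,1,1,0,1) are linearly independent over ℤ, the form Q vanishes identically on their span V (i.e. Q(vᵢ,vⱼ) = 0 for all i,j), and V is T-invariant, i.e. T(V) ⊆ V. (Thus V is a metabolizer for the isometric structure (H₂(N) ⊕ H₂(N), f_* ⊕ id, q ⊕ −q), which proves that the diffeomorphism f is bordant to the identity.) -/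

import Mathlib

/-- The intersection form of `N = CP² # (−CP²) # (−CP²)` over `ℤ`:
`B x y = x₁y₁ − x₂y₂ − x₃y₃`. -/
def interFormZ (x y : Fin 3 → ℤ) : ℤ := x 0 * y 0 - x 1 * y 1 - x 2 * y 2

/-- The integer matrix of `f_* = (ρ_{Σ₊} ∘ ρ_{Σ₋})_*` on `H₂(N)`. -/
def M : Matrix (Fin 3) (Fin 3) ℤ := !![9, 4, -8; 4, 1, -4; 8, 4, -7]

/-- The form `Q = q ⊕ −q` on `ℤ³ ⊕ ℤ³`. -/
def Q (u v : (Fin 3 → ℤ) × (Fin 3 → ℤ)) : ℤ := interFormZ u.1 v.1 - interFormZ u.2 v.2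

/-- The endomorphism `T = f_* ⊕ id` of `ℤ³ ⊕ ℤ³`. -/
def T (u : (Fin 3 → ℤ) × (Fin 3 → ℤ)) : (Fin 3 → ℤ) × (Fin 3 → ℤ) := (M.mulVec u.1, u.2)

def v1 : (Fin 3 → ℤ) × (Fin 3 → ℤ) := (![1, 0, 1], ![0, 0, 0])
def v2 : (Fin 3 → ℤ) × (Fin 3 → ℤ) := (![0, 1, 0], ![0, 1, 0])
def v3 : (Fin 3 → ℤ) × (Fin 3 → ℤ) := (![1, 0, 1], ![1, 0, 1])

lemma Tv1 : T v1 = v1 := by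
  unfold T v1 M
  ext i <;> simp <;> fin_cases i <;> simp [Matrix.mulVec, dotProduct, Fin.sum_univ_succ]

lemma Tv2 : T v2 = (4 : ℤ) • v1 + v2 := by
  unfold T v1 v2 M
  ext i <;> simp <;> fin_cases i <;> simp [Matrix.mulVec, dotProduct, Fin.sum_univ_succ]

lemma Tv3 : T v3 = v3 := by
  unfold T v3 M
  ext i <;> simp <;> fin_cases i <;> simp [Matrix.mulVec, dotProduct, Fin.sum_univ_succ]

lemma Tadd (u v : (Fin 3 → ℤ) × (Fin 3 → ℤ)) : T (u + v) = T u + T v := by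
  unfold T; ext i <;> simp [Matrix.mulVec_add]

lemma Tsmul (c : ℤ) (u : (Fin 3 → ℤ) × (Fin 3 → ℤ)) : T (c • u) = c • T u := by
  unfold T
  show (M.mulVec (c • u.1), c • u.2) = c • (M.mulVec u.1, u.2)
  rw [Matrix.mulVec_smul]
  rfl

/-- The span of `v₁, v₂, v₃` is a metabolizer for `(H₂(N) ⊕ H₂(N), f_* ⊕ id, q ⊕ −q)`. -/
theorem stmt4 :
    LinearIndependent ℤ ![v1, v2, v3] ∧
    (∀ i j : Fin 3, Q (![v1, v2, v3] i) (![v1, v2, v3] j) = 0) ∧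
    (∀ u ∈ Submodule.span ℤ ({v1, v2, v3} : Set ((Fin 3 → ℤ) × (Fin 3 → ℤ))),
      T u ∈ Submodule.span ℤ ({v1, v2, v3} : Set ((Fin 3 → ℤ) × (Fin 3 → ℤ)))) := by
  refine ⟨?_, ?_, ?_⟩
  · rw [Fintype.linearIndependent_iff]
    intro g hg i
    have h0 := congrFun (congrArg Prod.fst hg) 0
    have h1 := congrFun (congrArg Prod.fst hg) 1
    have h2 := congrFun (congrArg Prod.snd hg) 2
    simp [Fin.sum_univ_succ, v1, v2, v3] at h0 h1 h2
    fin_cases i <;> simp <;> omega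
  · intro i j
    fin_cases i <;> fin_cases j <;> simp [Q, interFormZ, v1, v2, v3]
  · intro u hu
    induction hu using Submodule.span_induction with
    | mem x hx =>
      have m1 : v1 ∈ Submodule.span ℤ ({v1, v2, v3} : Set ((Fin 3 → ℤ) × (Fin 3 → ℤ))) :=
        Submodule.subset_span (by simp)
      have m2 : v2 ∈ Submodule.span ℤ ({v1, v2, v3} : Set ((Fin 3 → ℤ) × (Fin 3 → ℤ))) :=
        Submodule.subset_span (by simp)
      have m3 : v3 ∈ Submodule.span ℤ ({v1, v2, v3} : Set ((Fin 3 → ℤ) × (Fin 3 → ℤ))) :=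
        Submodule.subset_span (by simp)
      rcases hx with rfl | rfl | rfl
      · rw [Tv1]; exact m1
      · rw [Tv2]; exact Submodule.add_mem _ (Submodule.smul_mem _ _ m1) m2
      · rw [Tv3]; exact m3
    | zero => simpa [T, Prod.mk_zero_zero] using Submodule.zero_mem (Submodule.span ℤ ({v1, v2, v3} : Set ((Fin 3 → ℤ) × (Fin 3 → ℤ))))
    | add x y _ _ hx hy => rw [Tadd]; exact Submodule.add_mem _ hx hy
    | smul c x _ hx => rw [Tsmul]; exact Submodule.smul_mem _ _ hx
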